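/- The system C is complete for classical propositional semantics: if every Boolean valuation that makes all formulas in Γ true makes A true, then A is derivable in C from assumptions in Γ. -/

import Mathlib

/- Milne's system **C** of classical propositional logic with general
introduction and general elimination rules, including Tarski's Rule. -/
inductive Formula : Type
  | atom : ℕ → Formula
  | neg  : Formula → Formula
  | conj : Formula → Formula → Formula
  | disj : Formula → Formula → Formula
  | imp  : Formula → Formula → Formula
  deriving DecidableEq

/-- Derivability `Γ ⊢_C A` in the system **C**.  Discharge of an assumption is
rendered by `insert`ing it into the context of the corresponding premise. -/
inductive Deriv : Set Formula → Formula → Prop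
  | ass {Γ A} : A ∈ Γ → Deriv Γ A
  | andI {Γ A B C} : Deriv Γ A → Deriv Γ B →
      Deriv (insert (Formula.conj A B) Γ) C → Deriv Γ C
  | andE {Γ A B C} : Deriv Γ (Formula.conj A B) →
      Deriv (insert A (insert B Γ)) C → Deriv Γ C
  | orI₁ {Γ A B C} : Deriv Γ A →
      Deriv (insert (Formula.disj A B) Γ) C → Deriv Γ C
  | orI₂ {Γ A B C} : Deriv Γ B →
      Deriv (insert (Formula.disj A B) Γ) C → Deriv Γ C
  | orE {Γ A B C} : Deriv Γ (Formula.disj A B) →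
      Deriv (insert A Γ) C → Deriv (insert B Γ) C → Deriv Γ C
  | impI {Γ A B C} : Deriv Γ B →
      Deriv (insert (Formula.imp A B) Γ) C → Deriv Γ C
  | tr {Γ A B C} : Deriv (insert A Γ) C →
      Deriv (insert (Formula.imp A B) Γ) C → Deriv Γ C
  | impE {Γ A B C} : Deriv Γ (Formula.imp A B) → Deriv Γ A →
      Deriv (insert B Γ) C → Deriv Γ C
  | negI {Γ A C} : Deriv (insert A Γ) C →
      Deriv (insert (Formula.neg A) Γ) C → Deriv Γ C
  | negE {Γ A C} : Deriv Γ (Formula.neg A) → Deriv Γ A → Deriv Γ C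
/-- The value of a formula under a Boolean valuation of the atoms, by the
classical truth tables for ¬, ∧, ∨, ⊃. -/
def Formula.eval (v : ℕ → Bool) : Formula → Bool
  | .atom n => v n
  | .neg A => !(A.eval v)
  | .conj A B => A.eval v && B.eval v
  | .disj A B => A.eval v || B.eval v
  | .imp A B => !(A.eval v) || B.eval v

section Aux
open Set

lemma Deriv.weaken {Γ Δ : Set Formula} {A : Formula} (h : Deriv Γ A) (hs : Γ ⊆ Δ) :
    Deriv Δ A := by
  induction h generalizing Δ with
  | ass h => exact Deriv.ass (hs h)
  | andI h1 h2 h3 ih1 ih2 ih3 =>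
      exact Deriv.andI (ih1 hs) (ih2 hs) (ih3 (insert_subset_insert hs))
  | andE h1 h2 ih1 ih2 =>
      exact Deriv.andE (ih1 hs) (ih2 (insert_subset_insert (insert_subset_insert hs)))
  | orI₁ h1 h2 ih1 ih2 => exact Deriv.orI₁ (ih1 hs) (ih2 (insert_subset_insert hs))
  | orI₂ h1 h2 ih1 ih2 => exact Deriv.orI₂ (ih1 hs) (ih2 (insert_subset_insert hs))
  | orE h1 h2 h3 ih1 ih2 ih3 =>
      exact Deriv.orE (ih1 hs) (ih2 (insert_subset_insert hs)) (ih3 (insert_subset_insert hs))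
  | impI h1 h2 ih1 ih2 => exact Deriv.impI (ih1 hs) (ih2 (insert_subset_insert hs))
  | tr h1 h2 ih1 ih2 =>
      exact Deriv.tr (ih1 (insert_subset_insert hs)) (ih2 (insert_subset_insert hs))
  | impE h1 h2 h3 ih1 ih2 ih3 =>
      exact Deriv.impE (ih1 hs) (ih2 hs) (ih3 (insert_subset_insert hs))
  | negI h1 h2 ih1 ih2 =>
      exact Deriv.negI (ih1 (insert_subset_insert hs)) (ih2 (insert_subset_insert hs))
  | negE h1 h2 ih1 ih2 => exact Deriv.negE (ih1 hs) (ih2 hs)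

lemma dAndI {Γ A B} (h1 : Deriv Γ A) (h2 : Deriv Γ B) : Deriv Γ (Formula.conj A B) :=
  Deriv.andI h1 h2 (Deriv.ass (mem_insert _ _))

lemma dAndE1 {Γ A B} (h : Deriv Γ (Formula.conj A B)) : Deriv Γ A :=
  Deriv.andE h (Deriv.ass (mem_insert _ _))

lemma dAndE2 {Γ A B} (h : Deriv Γ (Formula.conj A B)) : Deriv Γ B :=
  Deriv.andE h (Deriv.ass (mem_insert_of_mem _ (mem_insert _ _)))

lemma dOrI1 {Γ A B} (h : Deriv Γ A) : Deriv Γ (Formula.disj A B) :=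
  Deriv.orI₁ h (Deriv.ass (mem_insert _ _))

lemma dOrI2 {Γ A B} (h : Deriv Γ B) : Deriv Γ (Formula.disj A B) :=
  Deriv.orI₂ h (Deriv.ass (mem_insert _ _))

lemma dImpI {Γ A B} (h : Deriv (insert A Γ) B) : Deriv Γ (Formula.imp A B) :=
  Deriv.tr (Deriv.impI h (Deriv.ass (mem_insert _ _))) (Deriv.ass (mem_insert _ _))

lemma dImpE {Γ A B} (h1 : Deriv Γ (Formula.imp A B)) (h2 : Deriv Γ A) : Deriv Γ B :=
  Deriv.impE h1 h2 (Deriv.ass (mem_insert _ _))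

lemma dCut {Γ B C} (h1 : Deriv Γ B) (h2 : Deriv (insert B Γ) C) : Deriv Γ C :=
  dImpE (dImpI h2) h1

/-- Strip one inserted assumption out of a finite-support witness. -/
lemma strip1 {X : Formula} {Γ : Set Formula} {C : Formula}
    (H : ∃ Δ, Δ ⊆ insert X Γ ∧ Δ.Finite ∧ Deriv Δ C) :
    ∃ Θ, Θ ⊆ Γ ∧ Θ.Finite ∧ Deriv (insert X Θ) C := by
  obtain ⟨Δ, hsub, hfin, hd⟩ := H
  refine ⟨Δ \ {X}, ?_, hfin.diff, ?_⟩
  · intro y hy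
    rcases hsub hy.1 with h | h
    · exact absurd h hy.2
    · exact h
  · refine hd.weaken ?_
    rw [Set.insert_diff_singleton]
    exact subset_insert _ _

lemma strip2 {X Y : Formula} {Γ : Set Formula} {C : Formula}
    (H : ∃ Δ, Δ ⊆ insert X (insert Y Γ) ∧ Δ.Finite ∧ Deriv Δ C) :
    ∃ Θ, Θ ⊆ Γ ∧ Θ.Finite ∧ Deriv (insert X (insert Y Θ)) C := by
  obtain ⟨Δ, hsub, hfin, hd⟩ := H
  refine ⟨Δ \ {X, Y}, ?_, hfin.diff, ?_⟩
  · intro y hy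
    rcases hsub hy.1 with h | h | h
    · exact absurd (by simp [h]) hy.2
    · exact absurd (by simp [h]) hy.2
    · exact h
  · refine hd.weaken ?_
    intro y hy
    by_cases hX : y = X
    · exact hX ▸ mem_insert _ _
    by_cases hY : y = Y
    · exact hY ▸ mem_insert_of_mem _ (mem_insert _ _)
    · exact mem_insert_of_mem _ (mem_insert_of_mem _ ⟨hy, by simp [hX, hY]⟩)

lemma finite_support {Γ : Set Formula} {A : Formula} (h : Deriv Γ A) :
    ∃ Δ, Δ ⊆ Γ ∧ Δ.Finite ∧ Deriv Δ A := by
  induction h with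
  | @ass Γ A h => exact ⟨{A}, by simpa using h, finite_singleton _, Deriv.ass rfl⟩
  | andI h1 h2 h3 ih1 ih2 ih3 =>
      obtain ⟨Δ1, s1, f1, d1⟩ := ih1
      obtain ⟨Δ2, s2, f2, d2⟩ := ih2
      obtain ⟨Δ3, s3, f3, d3⟩ := strip1 ih3
      refine ⟨Δ1 ∪ Δ2 ∪ Δ3, by simp [union_subset_iff, s1, s2, s3], (f1.union f2).union f3, ?_⟩
      exact Deriv.andI (d1.weaken (by intro x hx; simp [hx]))
        (d2.weaken (by intro x hx; simp [hx]))
        (d3.weaken (insert_subset_insert (by intro x hx; simp [hx])))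
  | andE h1 h2 ih1 ih2 =>
      obtain ⟨Δ1, s1, f1, d1⟩ := ih1
      obtain ⟨Δ2, s2, f2, d2⟩ := strip2 ih2
      refine ⟨Δ1 ∪ Δ2, by simp [union_subset_iff, s1, s2], f1.union f2, ?_⟩
      exact Deriv.andE (d1.weaken subset_union_left)
        (d2.weaken (insert_subset_insert (insert_subset_insert subset_union_right)))
  | orI₁ h1 h2 ih1 ih2 =>
      obtain ⟨Δ1, s1, f1, d1⟩ := ih1
      obtain ⟨Δ2, s2, f2, d2⟩ := strip1 ih2
      exact ⟨Δ1 ∪ Δ2, by simp [union_subset_iff, s1, s2], f1.union f2,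
        Deriv.orI₁ (d1.weaken subset_union_left)
          (d2.weaken (insert_subset_insert subset_union_right))⟩
  | orI₂ h1 h2 ih1 ih2 =>
      obtain ⟨Δ1, s1, f1, d1⟩ := ih1
      obtain ⟨Δ2, s2, f2, d2⟩ := strip1 ih2
      exact ⟨Δ1 ∪ Δ2, by simp [union_subset_iff, s1, s2], f1.union f2,
        Deriv.orI₂ (d1.weaken subset_union_left)
          (d2.weaken (insert_subset_insert subset_union_right))⟩
  | orE h1 h2 h3 ih1 ih2 ih3 =>
      obtain ⟨Δ1, s1, f1, d1⟩ := ih1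
      obtain ⟨Δ2, s2, f2, d2⟩ := strip1 ih2
      obtain ⟨Δ3, s3, f3, d3⟩ := strip1 ih3
      refine ⟨Δ1 ∪ Δ2 ∪ Δ3, by simp [union_subset_iff, s1, s2, s3], (f1.union f2).union f3, ?_⟩
      exact Deriv.orE (d1.weaken (by intro x hx; simp [hx]))
        (d2.weaken (insert_subset_insert (by intro x hx; simp [hx])))
        (d3.weaken (insert_subset_insert (by intro x hx; simp [hx])))
  | impI h1 h2 ih1 ih2 =>
      obtain ⟨Δ1, s1, f1, d1⟩ := ih1
      obtain ⟨Δ2, s2, f2, d2⟩ := strip1 ih2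
      exact ⟨Δ1 ∪ Δ2, by simp [union_subset_iff, s1, s2], f1.union f2,
        Deriv.impI (d1.weaken subset_union_left)
          (d2.weaken (insert_subset_insert subset_union_right))⟩
  | tr h1 h2 ih1 ih2 =>
      obtain ⟨Δ1, s1, f1, d1⟩ := strip1 ih1
      obtain ⟨Δ2, s2, f2, d2⟩ := strip1 ih2
      exact ⟨Δ1 ∪ Δ2, by simp [union_subset_iff, s1, s2], f1.union f2,
        Deriv.tr (d1.weaken (insert_subset_insert subset_union_left))
          (d2.weaken (insert_subset_insert subset_union_right))⟩
  | impE h1 h2 h3 ih1 ih2 ih3 =>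
      obtain ⟨Δ1, s1, f1, d1⟩ := ih1
      obtain ⟨Δ2, s2, f2, d2⟩ := ih2
      obtain ⟨Δ3, s3, f3, d3⟩ := strip1 ih3
      refine ⟨Δ1 ∪ Δ2 ∪ Δ3, by simp [union_subset_iff, s1, s2, s3], (f1.union f2).union f3, ?_⟩
      exact Deriv.impE (d1.weaken (by intro x hx; simp [hx]))
        (d2.weaken (by intro x hx; simp [hx]))
        (d3.weaken (insert_subset_insert (by intro x hx; simp [hx])))
  | negI h1 h2 ih1 ih2 =>
      obtain ⟨Δ1, s1, f1, d1⟩ := strip1 ih1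
      obtain ⟨Δ2, s2, f2, d2⟩ := strip1 ih2
      exact ⟨Δ1 ∪ Δ2, by simp [union_subset_iff, s1, s2], f1.union f2,
        Deriv.negI (d1.weaken (insert_subset_insert subset_union_left))
          (d2.weaken (insert_subset_insert subset_union_right))⟩
  | negE h1 h2 ih1 ih2 =>
      obtain ⟨Δ1, s1, f1, d1⟩ := ih1
      obtain ⟨Δ2, s2, f2, d2⟩ := ih2
      exact ⟨Δ1 ∪ Δ2, by simp [union_subset_iff, s1, s2], f1.union f2,
        Deriv.negE (d1.weaken subset_union_left) (d2.weaken subset_union_right)⟩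

end Aux

/-- Completeness of the system C for classical propositional
semantics: if every Boolean valuation making all formulas of `Γ` true makes
`A` true, then `A` is derivable in C from assumptions in `Γ`. -/
theorem completeness (Γ : Set Formula) (A : Formula)
    (h : ∀ v : ℕ → Bool, (∀ B ∈ Γ, B.eval v = true) → A.eval v = true) :
    Deriv Γ A := by
  by_contra hnd
  -- Zorn: extend Γ to a maximal set not deriving A
  set S : Set (Set Formula) := {Δ | ¬ Deriv Δ A} with hS
  have hub : ∀ c ⊆ S, IsChain (· ⊆ ·) c → c.Nonempty →
      ∃ ub ∈ S, ∀ s ∈ c, s ⊆ ub := by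
    intro c hcS hchain hne
    refine ⟨⋃₀ c, ?_, fun s hs => Set.subset_sUnion_of_mem hs⟩
    intro hd
    obtain ⟨Δ, hsub, hfin, hder⟩ := finite_support hd
    obtain ⟨s, hsc, hΔs⟩ := DirectedOn.exists_mem_subset_of_finset_subset_biUnion
      (f := id) hne (hchain.directedOn) (s := hfin.toFinset)
      (by rw [Set.Finite.coe_toFinset]; simpa [Set.sUnion_eq_biUnion] using hsub)
    exact hcS hsc (hder.weaken (by rwa [Set.Finite.coe_toFinset] at hΔs))
  obtain ⟨Δ, hΓΔ, hmax⟩ := zorn_subset_nonempty S hub Γ hnd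
  · have hΔ : ¬ Deriv Δ A := hmax.prop
    -- deductive closure
    have hnotmem : ∀ B, B ∉ Δ → Deriv (insert B Δ) A := by
      intro B hB
      by_contra hd
      exact hB (hmax.2 hd (Set.subset_insert _ _) (Set.mem_insert _ _))
    have hclosed : ∀ B, Deriv Δ B → B ∈ Δ := by
      intro B hd
      by_contra hB
      exact hΔ (dCut hd (hnotmem B hB))
    have hcomplete : ∀ B, B ∈ Δ ∨ Formula.neg B ∈ Δ := by
      intro B
      by_contra hB
      push_neg at hB
      exact hΔ (Deriv.negI (hnotmem B hB.1) (hnotmem _ hB.2))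
    have hcons : ∀ B, B ∈ Δ → Formula.neg B ∈ Δ → False := by
      intro B h1 h2
      exact hΔ (Deriv.negE (Deriv.ass h2) (Deriv.ass h1))
    -- the canonical valuation
    classical
    set v : ℕ → Bool := fun n => decide (Formula.atom n ∈ Δ) with hv
    have truth : ∀ B : Formula, B.eval v = true ↔ B ∈ Δ := by
      intro B
      induction B with
      | atom n => simp [Formula.eval, hv]
      | neg B ih =>
          simp only [Formula.eval, Bool.not_eq_true', ← Bool.not_eq_true]
          constructor
          · intro hB
            rcases hcomplete B with hm | hm
            · exact absurd (ih.mpr hm) hB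
            · exact hm
          · intro hm hB
            exact hcons B (ih.mp hB) hm
      | conj B C ihB ihC =>
          simp only [Formula.eval, Bool.and_eq_true, ihB, ihC]
          constructor
          · rintro ⟨h1, h2⟩
            exact hclosed _ (dAndI (Deriv.ass h1) (Deriv.ass h2))
          · intro hm
            exact ⟨hclosed _ (dAndE1 (Deriv.ass hm)), hclosed _ (dAndE2 (Deriv.ass hm))⟩
      | disj B C ihB ihC =>
          simp only [Formula.eval, Bool.or_eq_true, ihB, ihC]
          constructor
          · rintro (h1 | h1)
            · exact hclosed _ (dOrI1 (Deriv.ass h1))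
            · exact hclosed _ (dOrI2 (Deriv.ass h1))
          · intro hm
            by_contra hB
            push_neg at hB
            refine hΔ (Deriv.orE (Deriv.ass hm) ?_ ?_)
            · rcases hcomplete B with h1 | h1
              · exact absurd h1 hB.1
              · exact Deriv.negE (Deriv.ass (Set.mem_insert_of_mem _ h1))
                  (Deriv.ass (Set.mem_insert _ _))
            · rcases hcomplete C with h1 | h1
              · exact absurd h1 hB.2
              · exact Deriv.negE (Deriv.ass (Set.mem_insert_of_mem _ h1))
                  (Deriv.ass (Set.mem_insert _ _))
      | imp B C ihB ihC =>
          simp only [Formula.eval, Bool.or_eq_true, Bool.not_eq_true', ← Bool.not_eq_true,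
            ihB, ihC]
          constructor
          · rintro (h1 | h1)
            · rcases hcomplete B with h2 | h2
              · exact absurd h2 h1
              · refine hclosed _ (dImpI ?_)
                exact Deriv.negE (Deriv.ass (Set.mem_insert_of_mem _ h2))
                  (Deriv.ass (Set.mem_insert _ _))
            · exact hclosed _ (dImpI (Deriv.ass (Set.mem_insert_of_mem _ h1)))
          · intro hm
            by_cases hB : B ∈ Δ
            · exact Or.inr (hclosed _ (dImpE (Deriv.ass hm) (Deriv.ass hB)))
            · exact Or.inl hB
    -- conclude
    have : A.eval v = true := h v fun B hB => (truth B).mpr (hΓΔ hB)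
    exact hΔ (Deriv.ass ((truth A).mp this))
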